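/- The block circulant code C_BC[μ,2,ω,ρ] with overlap factor λ=2 has minimum distance exactly 2ρ+1. -/

import Mathlib

open Fin.NatCast in
/-- Membership in the block circulant code `C_BC[M, λ, ω, ρ]` in its evaluation-code
form: the codeword consists of `M` data blocks `d i : Fin ω → F` and `M` parity blocks
`p i : Fin ρ → F`; for every `i` the `i`-th local codeword (the data blocks
`d i, d (i+1), …, d (i+λ-1)` together with the parity block `p i`) is the evaluation of a
message polynomial of degree `≤ λω - 1` at the evaluation points `αo`/`αe`, the point
sets being shared cyclically (with period `λ`) between consecutive local codes. -/
def inBC {F : Type*} [Field F] (M lam ω ρ : ℕ) [NeZero M] [NeZero lam]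
    (αo : Fin lam → Fin ω → F) (αe : Fin lam → Fin ρ → F)
    (d : Fin M → Fin ω → F) (p : Fin M → Fin ρ → F) : Prop :=
  ∀ i : Fin M, ∃ m : Polynomial F, m.natDegree ≤ lam * ω - 1 ∧
    (∀ (j : Fin lam) (s : Fin ω),
      d (i + ((j : ℕ) : Fin M)) s = m.eval (αo (((i : ℕ) : Fin lam) + j) s)) ∧
    (∀ s : Fin ρ, p i s = m.eval (αe ((i : ℕ) : Fin lam) s))

/-- Hamming weight of a codeword of the block circulant code. -/
def bcWt {F : Type*} [Field F] [DecidableEq F] {M ω ρ : ℕ}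
    (d : Fin M → Fin ω → F) (p : Fin M → Fin ρ → F) : ℕ :=
  ∑ i : Fin M, ((Finset.univ.filter fun s => d i s ≠ 0).card +
    (Finset.univ.filter fun s => p i s ≠ 0).card)


open Polynomial Finset
open Fin.NatCast
open Fin.CommRing

section Helpers
variable {F : Type*} [Field F] [DecidableEq F] {ω ρ : ℕ}
  (αo : Fin 2 → Fin ω → F) (αe : Fin 2 → Fin ρ → F)

lemma cntAux {ι : Type*} [Fintype ι] [DecidableEq ι]
    (pts : ι → F) (hinj : Function.Injective pts) {m : F[X]} (hm : m ≠ 0) :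
    Fintype.card ι - m.natDegree ≤ (univ.filter fun s => m.eval (pts s) ≠ 0).card := by
  have h1 : ((univ : Finset ι).filter fun s => m.eval (pts s) = 0).card ≤ m.natDegree := by
    have himg : (((univ : Finset ι).filter fun s => m.eval (pts s) = 0).image pts).val ⊆ m.roots := by
      intro x hx
      simp only [Finset.image_val, Multiset.mem_dedup, Multiset.mem_map, Finset.mem_val,
        Finset.mem_filter] at hx
      obtain ⟨s, ⟨-, hs⟩, rfl⟩ := hx
      exact (mem_roots hm).2 hs
    calc ((univ : Finset ι).filter fun s => m.eval (pts s) = 0).card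
        = (((univ : Finset ι).filter fun s => m.eval (pts s) = 0).image pts).card :=
          (Finset.card_image_of_injective _ hinj).symm
      _ ≤ m.natDegree := Polynomial.card_le_degree_of_subset_roots himg
  have h2 := Finset.card_filter_add_card_filter_not (s := (univ : Finset ι))
    (p := fun s => m.eval (pts s) = 0)
  rw [Finset.card_univ] at h2
  simp only [ne_eq]
  omega

lemma filterSum {α β : Type*} [Fintype α] [Fintype β]
    (P : α ⊕ β → Prop) [DecidablePred P] :
    ((univ : Finset (α ⊕ β)).filter P).card
      = ((univ : Finset α).filter fun a => P (.inl a)).card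
        + ((univ : Finset β).filter fun b => P (.inr b)).card := by
  rw [← Finset.card_toLeft_add_card_toRight]
  congr 1 <;> · apply Finset.card_nbij' id id <;> intro x hx <;> simp_all

variable (hinj : Function.Injective
      (Sum.elim (fun x : Fin 2 × Fin ω => αo x.1 x.2)
                (fun x : Fin 2 × Fin ρ => αe x.1 x.2)))

include hinj

set_option linter.unusedSectionVars false

lemma inj4 (c : Fin 2) : Function.Injective
    (Sum.elim (Sum.elim (αo c) (αo (c+1))) (Sum.elim (αe c) (αe (c+1)))) := by
  have hcc : ∀ c' : Fin 2, c' ≠ c' + 1 := by decide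
  have he : Function.Injective
      (Sum.map (Sum.elim (fun s : Fin ω => ((c, s) : Fin 2 × Fin ω))
          (fun s => (c+1, s)))
        (Sum.elim (fun t : Fin ρ => ((c, t) : Fin 2 × Fin ρ))
          (fun t => (c+1, t)))) := by
    rintro ((s|s)|(t|t)) ((s'|s')|(t'|t')) h <;>
      simp only [Sum.map_inl, Sum.map_inr, Sum.elim_inl, Sum.elim_inr, Sum.inl.injEq,
        Sum.inr.injEq, Prod.mk.injEq, reduceCtorEq] at h <;>
      first
      | rfl
      | (obtain ⟨h1, h2⟩ := h; subst h2; rfl)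
      | (exact absurd h.1 (hcc c))
      | (exact absurd h.1.symm (hcc c))
  have : (Sum.elim (Sum.elim (αo c) (αo (c+1))) (Sum.elim (αe c) (αe (c+1))))
      = (Sum.elim (fun x : Fin 2 × Fin ω => αo x.1 x.2)
                (fun x : Fin 2 × Fin ρ => αe x.1 x.2)) ∘
        (Sum.map (Sum.elim (fun s : Fin ω => ((c, s) : Fin 2 × Fin ω))
          (fun s => (c+1, s)))
        (Sum.elim (fun t : Fin ρ => ((c, t) : Fin 2 × Fin ρ))
          (fun t => (c+1, t)))) := by
    funext x; rcases x with (s|s)|(t|t) <;> rfl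
  rw [this]
  exact hinj.comp he

lemma cnt4 (hω : 0 < ω) (c : Fin 2) {m : F[X]} (hm : m ≠ 0) (hdeg : m.natDegree ≤ 2*ω - 1) :
    2*ρ + 1 ≤ (univ.filter fun s => m.eval (αo c s) ≠ 0).card
      + (univ.filter fun s => m.eval (αo (c+1) s) ≠ 0).card
      + (univ.filter fun s => m.eval (αe c s) ≠ 0).card
      + (univ.filter fun s => m.eval (αe (c+1) s) ≠ 0).card := by
  have h := cntAux _ (inj4 αo αe hinj c) hm
  rw [filterSum, filterSum, filterSum] at h
  simp only [Sum.elim_inl, Sum.elim_inr, Fintype.card_sum, Fintype.card_fin] at h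
  refine le_trans ?_ (h.trans (le_of_eq ?_))
  · omega
  · simp only [add_assoc]; rfl

lemma inj3 (c : Fin 2) : Function.Injective
    (Sum.elim (Sum.elim (αo c) (αo (c+1))) (αe c)) := by
  have h4 := inj4 αo αe hinj c
  intro x y h
  have hrw : ∀ z : (Fin ω ⊕ Fin ω) ⊕ Fin ρ,
      Sum.elim (Sum.elim (αo c) (αo (c+1))) (αe c) z
        = Sum.elim (Sum.elim (αo c) (αo (c+1))) (Sum.elim (αe c) (αe (c+1)))
            (Sum.map id Sum.inl z) := by rintro ((s|s)|t) <;> rfl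
  rw [hrw x, hrw y] at h
  have := h4 h
  rcases x with (s|s)|t <;> rcases y with (s'|s')|t' <;> simp_all

lemma cnt3 (hω : 0 < ω) (c : Fin 2) {m : F[X]} (hm : m ≠ 0) (hdeg : m.natDegree ≤ 2*ω - 1) :
    ρ + 1 ≤ (univ.filter fun s => m.eval (αo c s) ≠ 0).card
      + (univ.filter fun s => m.eval (αo (c+1) s) ≠ 0).card
      + (univ.filter fun s => m.eval (αe c s) ≠ 0).card := by
  have h := cntAux _ (inj3 αo αe hinj c) hm
  rw [filterSum, filterSum] at h
  simp only [Sum.elim_inl, Sum.elim_inr, Fintype.card_sum, Fintype.card_fin] at h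
  refine le_trans ?_ (h.trans (le_of_eq ?_))
  · omega
  · rfl

lemma inj2 (c : Fin 2) : Function.Injective (Sum.elim (αo c) (αo (c+1))) := by
  have h3 := inj3 αo αe hinj c
  intro x y h
  have hrw : ∀ z : Fin ω ⊕ Fin ω,
      Sum.elim (αo c) (αo (c+1)) z
        = Sum.elim (Sum.elim (αo c) (αo (c+1))) (αe c) (Sum.inl z) := by rintro (s|s) <;> rfl
  rw [hrw x, hrw y] at h
  have := h3 h
  simpa using this

lemma cnt2 (hω : 0 < ω) (c : Fin 2) {m : F[X]} (hm : m ≠ 0) (hdeg : m.natDegree ≤ 2*ω - 1) :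
    1 ≤ (univ.filter fun s => m.eval (αo c s) ≠ 0).card
      + (univ.filter fun s => m.eval (αo (c+1) s) ≠ 0).card := by
  have h := cntAux _ (inj2 αo αe hinj c) hm
  rw [filterSum] at h
  simp only [Sum.elim_inl, Sum.elim_inr, Fintype.card_sum, Fintype.card_fin] at h
  refine le_trans ?_ (h.trans (le_of_eq ?_))
  · omega
  · rfl

end Helpers

lemma par_add {M : ℕ} [NeZero M] (hM2 : 2 ∣ M) (i : Fin M) (n : ℕ) :
    (((i + (n : Fin M)).val : ℕ) : Fin 2) = ((i.val : ℕ) : Fin 2) + (n : Fin 2) := by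
  apply Fin.ext
  simp only [Fin.val_natCast, Fin.val_add]
  rw [Nat.mod_mod_of_dvd _ hM2, Nat.add_mod, Nat.mod_mod_of_dvd _ hM2, ← Nat.add_mod]


set_option linter.unusedSectionVars false
section Code
variable {F : Type*} [Field F] [DecidableEq F] {ω ρ M : ℕ} [NeZero M]
  {αo : Fin 2 → Fin ω → F} {αe : Fin 2 → Fin ρ → F}
  {d : Fin M → Fin ω → F} {p : Fin M → Fin ρ → F}

lemma extractBC (hin : inBC M 2 ω ρ αo αe d p) (i : Fin M) :
    ∃ m : Polynomial F, m.natDegree ≤ 2*ω - 1 ∧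
      (∀ s, d i s = m.eval (αo ((i.val : ℕ) : Fin 2) s)) ∧
      (∀ s, d (i+1) s = m.eval (αo (((i.val : ℕ) : Fin 2) + 1) s)) ∧
      (∀ s, p i s = m.eval (αe ((i.val : ℕ) : Fin 2) s)) := by
  obtain ⟨m, hdeg, hd, hp⟩ := hin i
  exact ⟨m, hdeg, fun s => by simpa using hd 0 s, fun s => by simpa using hd 1 s, hp⟩

variable (hinj : Function.Injective
      (Sum.elim (fun x : Fin 2 × Fin ω => αo x.1 x.2)
                (fun x : Fin 2 × Fin ρ => αe x.1 x.2)))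

include hinj

lemma localBound (hω : 0 < ω) (hin : inBC M 2 ω ρ αo αe d p) (i : Fin M)
    (hne : d i ≠ 0 ∨ d (i+1) ≠ 0) :
    ρ + 1 ≤ (univ.filter fun s => d i s ≠ 0).card
      + (univ.filter fun s => d (i+1) s ≠ 0).card
      + (univ.filter fun s => p i s ≠ 0).card := by
  obtain ⟨m, hdeg, h0, h1, hp⟩ := extractBC hin i
  have hm : m ≠ 0 := by
    rintro rfl
    rcases hne with h | h
    · exact h (funext fun s => by simp [h0 s])
    · exact h (funext fun s => by simp [h1 s])
  have h := cnt3 αo αe hinj hω ((i.val : ℕ) : Fin 2) hm hdeg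
  simp only [h0, h1, hp]
  exact h

lemma hardPair (hω : 0 < ω) (hM2 : 2 ∣ M) (hM1 : 1 < M)
    (hin : inBC M 2 ω ρ αo αe d p) (i0 : Fin M)
    (hd1 : d (i0+1) ≠ 0) (h00 : d (i0+1+1) = d i0) :
    2*ρ + 1 ≤ bcWt d p := by
  have hc : True := trivial
  obtain ⟨m, hdeg, h0, h1, hp0⟩ := extractBC hin i0
  obtain ⟨m', hdeg', h0', h1', hp1⟩ := extractBC hin (i0+1)
  have hpar : (((i0+1 : Fin M).val : ℕ) : Fin 2) = ((i0.val : ℕ) : Fin 2) + 1 := by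
    have := par_add hM2 i0 1
    simpa using this
  rw [hpar] at h0' h1' hp1
  have hc2 : ∀ c' : Fin 2, c' + 1 + 1 = c' := by decide
  rw [hc2 _] at h1'
  -- m = m'
  have hmeq : m = m' := by
    by_contra hne
    have hg : m - m' ≠ 0 := sub_ne_zero.2 hne
    have hdg : (m - m').natDegree ≤ 2*ω - 1 :=
      le_trans (natDegree_sub_le _ _) (max_le hdeg hdeg')
    have hcnt := cnt2 αo αe hinj hω ((i0.val : ℕ) : Fin 2) hg hdg
    have e1 : (univ.filter fun s => (m - m').eval (αo ((i0.val : ℕ) : Fin 2) s) ≠ 0) = ∅ := by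
      apply Finset.filter_eq_empty_iff.2
      intro s _
      simp only [eval_sub, ne_eq, not_not, sub_eq_zero]
      rw [← h0 s, ← h1' s, h00]
    have e2 : (univ.filter fun s => (m - m').eval (αo (((i0.val : ℕ) : Fin 2)+1) s) ≠ 0) = ∅ := by
      apply Finset.filter_eq_empty_iff.2
      intro s _
      simp only [eval_sub, ne_eq, not_not, sub_eq_zero]
      rw [← h1 s, ← h0' s]
    rw [e1, e2] at hcnt
    simp at hcnt
  subst hmeq
  have hm : m ≠ 0 := by
    rintro rfl
    exact hd1 (funext fun s => by simp [h1 s])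
  have h4 := cnt4 αo αe hinj hω ((i0.val : ℕ) : Fin 2) hm hdeg
  have hne01 : i0 ≠ i0 + 1 := by
    intro h
    have h1' : (0 : Fin M) = 1 := by
      nth_rewrite 1 [← add_zero i0] at h; exact add_left_cancel h
    have := congrArg Fin.val h1'
    rw [Fin.val_zero, Fin.val_one', Nat.mod_eq_of_lt hM1] at this
    omega
  have hsum : ∑ i ∈ ({i0, i0+1} : Finset (Fin M)),
      ((univ.filter fun s => d i s ≠ 0).card + (univ.filter fun s => p i s ≠ 0).card)
      ≤ bcWt d p := by
    apply Finset.sum_le_sum_of_subset (Finset.subset_univ _)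
  rw [Finset.sum_pair hne01] at hsum
  simp only [h0, h1, hp0, hp1] at hsum
  omega

end Code

lemma self_ne_add_one' {M : ℕ} [NeZero M] (hM1 : 1 < M) (i : Fin M) : i ≠ i + 1 := by
  intro h
  have h1 : (0 : Fin M) = 1 := by
    nth_rewrite 1 [← add_zero i] at h; exact add_left_cancel h
  have := congrArg Fin.val h1
  rw [Fin.val_zero, Fin.val_one', Nat.mod_eq_of_lt hM1] at this
  omega


/-- The block circulant code `C_BC[μ, 2, ω, ρ]` with overlap factor
`λ = 2` (and `μ = 2ν` local codes, all `2(ω+ρ)` evaluation points distinct and nonzero)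
has minimum distance exactly `2ρ + 1`. -/
theorem stmt7 {F : Type*} [Field F] [DecidableEq F] {ν ω ρ : ℕ}
    (hν : 0 < ν) (hω : 0 < ω) (hρ : 0 < ρ)
    (M : ℕ) [NeZero M] (hM : M = 2 * ν)
    (αo : Fin 2 → Fin ω → F) (αe : Fin 2 → Fin ρ → F)
    (hinj : Function.Injective
      (Sum.elim (fun x : Fin 2 × Fin ω => αo x.1 x.2)
                (fun x : Fin 2 × Fin ρ => αe x.1 x.2)))
    (h0o : ∀ j s, αo j s ≠ 0) (h0e : ∀ j s, αe j s ≠ 0) :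
    (∀ (d : Fin M → Fin ω → F) (p : Fin M → Fin ρ → F),
      inBC M 2 ω ρ αo αe d p → (d ≠ 0 ∨ p ≠ 0) → 2 * ρ + 1 ≤ bcWt d p) ∧
    (∃ (d : Fin M → Fin ω → F) (p : Fin M → Fin ρ → F),
      inBC M 2 ω ρ αo αe d p ∧ (d ≠ 0 ∨ p ≠ 0) ∧ bcWt d p = 2 * ρ + 1) := by
  classical
  subst hM
  have hM2 : 2 ∣ 2 * ν := ⟨ν, rfl⟩
  have hM1 : 1 < 2 * ν := by omega
  constructor
  · intro d p hin hne
    have hd : d ≠ 0 := by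
      rintro rfl
      rcases hne with h | hp
      · exact h rfl
      · obtain ⟨k, hk⟩ := Function.ne_iff.1 hp
        obtain ⟨m, hdeg, h0, h1, hpk⟩ := extractBC hin k
        have hm : m ≠ 0 := by
          rintro rfl
          exact hk (funext fun s => by simp [hpk s])
        have hcnt := cnt2 αo αe hinj hω ((k.val : ℕ) : Fin 2) hm hdeg
        have e1 : (univ.filter fun s => m.eval (αo ((k.val : ℕ) : Fin 2) s) ≠ 0) = ∅ := by
          apply Finset.filter_eq_empty_iff.2
          intro s _
          simpa using (h0 s).symm
        have e2 : (univ.filter fun s => m.eval (αo (((k.val : ℕ) : Fin 2) + 1) s) ≠ 0) = ∅ := by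
          apply Finset.filter_eq_empty_iff.2
          intro s _
          simpa using (h1 s).symm
        rw [e1, e2] at hcnt
        simp at hcnt
    obtain ⟨k, hk⟩ := Function.ne_iff.1 hd
    by_cases hall : ∀ i : Fin (2*ν), d i ≠ 0
    · by_cases hν1 : ν = 1
      · subst hν1
        apply hardPair hinj hω hM2 hM1 hin k (hall _)
        have c : (((1:ℕ)+(1:ℕ) : ℕ) : Fin (2*1)) = 0 := Fin.natCast_eq_zero.2 (by omega)
        rw [Nat.cast_add, Nat.cast_one] at c
        rw [add_assoc, c, add_zero]
      · have hdist : ∀ x y : ℕ, x < 2*ν → y < 2*ν → x ≠ y →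
            k + (x : Fin (2*ν)) ≠ k + (y : Fin (2*ν)) := by
          intro x y hx hy hxy h
          have h' := congrArg Fin.val (add_left_cancel h)
          rw [Fin.val_natCast, Fin.val_natCast, Nat.mod_eq_of_lt hx, Nat.mod_eq_of_lt hy] at h'
          exact hxy h'
        have e0 : k + ((0:ℕ) : Fin (2*ν)) = k := by rw [Nat.cast_zero, add_zero]
        have c1 : k + 1 = k + ((1:ℕ) : Fin (2*ν)) := by norm_num
        have e23 : k + ((2:ℕ) : Fin (2*ν)) + 1 = k + ((3:ℕ) : Fin (2*ν)) := by
          rw [show (3:ℕ) = 2+1 from rfl, Nat.cast_add, Nat.cast_one]; ring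
        have l1 := localBound hinj hω hin k (Or.inl (hall k))
        have l2 := localBound hinj hω hin (k + ((2:ℕ) : Fin (2*ν))) (Or.inl (hall _))
        rw [c1] at l1
        rw [e23] at l2
        have n01 := hdist 0 1 (by omega) (by omega) (by omega)
        have n02 := hdist 0 2 (by omega) (by omega) (by omega)
        have n03 := hdist 0 3 (by omega) (by omega) (by omega)
        have n12 := hdist 1 2 (by omega) (by omega) (by omega)
        have n13 := hdist 1 3 (by omega) (by omega) (by omega)
        have n23 := hdist 2 3 (by omega) (by omega) (by omega)
        rw [e0] at n01 n02 n03
        have hsum : ∑ i ∈ ({k, k + ((1:ℕ) : Fin (2*ν)), k + ((2:ℕ) : Fin (2*ν)),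
            k + ((3:ℕ) : Fin (2*ν))} : Finset (Fin (2*ν))),
            ((univ.filter fun s => d i s ≠ 0).card + (univ.filter fun s => p i s ≠ 0).card)
            ≤ bcWt d p := Finset.sum_le_sum_of_subset (Finset.subset_univ _)
        rw [Finset.sum_insert (by
            simp only [Finset.mem_insert, Finset.mem_singleton]; push_neg
            exact ⟨n01, n02, n03⟩),
          Finset.sum_insert (by
            simp only [Finset.mem_insert, Finset.mem_singleton]; push_neg
            exact ⟨n12, n13⟩),
          Finset.sum_pair n23] at hsum
        omega
    · push_neg at hall
      obtain ⟨z, hz⟩ := hall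
      have hzk : z ≠ k := by rintro rfl; exact hk hz
      obtain ⟨nf, hnfM, hwf⟩ : ∃ n : ℕ, n < 2*ν ∧ (n ≠ 0 ∧ d (k + (n : Fin (2*ν))) = 0) := by
        refine ⟨(z - k).val, Fin.is_lt _, ?_, ?_⟩
        · intro h
          apply hzk
          have h2 : z - k = 0 := Fin.ext (by simpa using h)
          exact sub_eq_zero.1 h2
        · rw [Fin.cast_val_eq_self]
          have h3 : k + (z - k) = z := by ring
          rw [h3]; exact hz
      obtain ⟨nb, hnbM, hwb⟩ : ∃ n : ℕ, n < 2*ν ∧ (n ≠ 0 ∧ d (k - (n : Fin (2*ν))) = 0) := by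
        refine ⟨(k - z).val, Fin.is_lt _, ?_, ?_⟩
        · intro h
          apply hzk
          have h2 : k - z = 0 := Fin.ext (by simpa using h)
          exact (sub_eq_zero.1 h2).symm
        · rw [Fin.cast_val_eq_self]
          have h3 : k - (k - z) = z := by ring
          rw [h3]; exact hz
      have hPf : ∃ n : ℕ, n ≠ 0 ∧ d (k + ((n : ℕ) : Fin (2*ν))) = 0 := ⟨nf, hwf⟩
      have hPb : ∃ n : ℕ, n ≠ 0 ∧ d (k - ((n : ℕ) : Fin (2*ν))) = 0 := ⟨nb, hwb⟩
      obtain ⟨hb0, hbz⟩ := Nat.find_spec hPf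
      obtain ⟨ha0, haz⟩ := Nat.find_spec hPb
      set b := Nat.find hPf with hbdef
      set a := Nat.find hPb with hadef
      have hbmin : ∀ j : ℕ, j ≠ 0 → j < b → d (k + ((j : ℕ) : Fin (2*ν))) ≠ 0 :=
        fun j hj hlt hdj => Nat.find_min hPf hlt ⟨hj, hdj⟩
      have hamin : ∀ j : ℕ, j ≠ 0 → j < a → d (k - ((j : ℕ) : Fin (2*ν))) ≠ 0 :=
        fun j hj hlt hdj => Nat.find_min hPb hlt ⟨hj, hdj⟩
      have hbM : b < 2*ν := lt_of_le_of_lt (Nat.find_le hwf) hnfM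
      have haM : a < 2*ν := lt_of_le_of_lt (Nat.find_le hwb) hnbM
      have hb1 : 1 ≤ b := Nat.one_le_iff_ne_zero.2 hb0
      have ha1 : 1 ≤ a := Nat.one_le_iff_ne_zero.2 ha0
      set i0 : Fin (2*ν) := k - ((a : ℕ) : Fin (2*ν)) with hi0
      set i1 : Fin (2*ν) := k + (((b-1 : ℕ)) : Fin (2*ν)) with hi1
      have hcast_b : (((b-1 : ℕ)) : Fin (2*ν)) + 1 = ((b : ℕ) : Fin (2*ν)) := by
        have hh : b - 1 + 1 = b := by omega
        calc (((b-1 : ℕ)) : Fin (2*ν)) + 1 = (((b-1)+1 : ℕ) : Fin (2*ν)) := by push_cast; ring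
          _ = ((b : ℕ) : Fin (2*ν)) := by rw [hh]
      have F1 : d i0 = 0 := haz
      have F2 : d (i1 + 1) = 0 := by rw [hi1, add_assoc, hcast_b]; exact hbz
      have hcast_a : ((a : ℕ) : Fin (2*ν)) = (((a-1 : ℕ)) : Fin (2*ν)) + 1 := by
        have hh : a - 1 + 1 = a := by omega
        calc ((a : ℕ) : Fin (2*ν)) = (((a-1)+1 : ℕ) : Fin (2*ν)) := by rw [hh]
          _ = (((a-1 : ℕ)) : Fin (2*ν)) + 1 := by push_cast; ring
      have F3 : d (i0 + 1) ≠ 0 := by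
        have hrw : i0 + 1 = k - (((a-1 : ℕ)) : Fin (2*ν)) := by rw [hi0, hcast_a]; ring
        rw [hrw]
        rcases eq_or_ne a 1 with h1 | h1
        · rw [h1]; simpa using hk
        · exact hamin (a-1) (by omega) (by omega)
      have F4 : d i1 ≠ 0 := by
        rw [hi1]
        rcases eq_or_ne b 1 with h1 | h1
        · rw [h1]; simpa using hk
        · exact hbmin (b-1) (by omega) (by omega)
      have F5 : i0 ≠ i1 := by
        intro h
        rw [hi0, hi1] at h
        have h' : ((a : ℕ) : Fin (2*ν)) + (((b-1 : ℕ)) : Fin (2*ν)) = 0 := by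
          linear_combination -h
        rw [← Nat.cast_add, Fin.natCast_eq_zero] at h'
        have heq : a + (b-1) = 2*ν :=
          Nat.eq_of_dvd_of_lt_two_mul (by omega) h' (by omega)
        rcases eq_or_ne a 1 with ha' | ha'
        · omega
        · have hcc : ((b + (a-1) : ℕ) : Fin (2*ν)) = 0 := by
            rw [show b + (a-1) = 2*ν from by omega]
            exact Fin.natCast_eq_zero.2 dvd_rfl
          rw [Nat.cast_add] at hcc
          have hbneg : ((b : ℕ) : Fin (2*ν)) = - (((a-1 : ℕ)) : Fin (2*ν)) :=
            eq_neg_of_add_eq_zero_left hcc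
          have hcontr : k + ((b : ℕ) : Fin (2*ν)) = k - (((a-1 : ℕ)) : Fin (2*ν)) := by
            rw [hbneg]; ring
          exact hamin (a-1) (by omega) (by omega) (hcontr ▸ hbz)
      by_cases h01 : i1 = i0 + 1
      · apply hardPair hinj hω hM2 hM1 hin i0
        · rw [← h01]; exact F4
        · rw [show i0 + 1 + 1 = i1 + 1 from by rw [h01], F2, F1]
      · have l0 := localBound hinj hω hin i0 (Or.inr F3)
        have l1 := localBound hinj hω hin i1 (Or.inl F4)
        have z0 : (univ.filter fun s => d i0 s ≠ 0).card = 0 := by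
          rw [F1]; simp
        have z1 : (univ.filter fun s => d (i1+1) s ≠ 0).card = 0 := by
          rw [F2]; simp
        have hne1 : i0 ≠ i0 + 1 := self_ne_add_one' hM1 i0
        have hne2 : i0 + 1 ≠ i1 := fun h => h01 h.symm
        have hsum : ∑ i ∈ ({i0, i0+1, i1} : Finset (Fin (2*ν))),
            ((univ.filter fun s => d i s ≠ 0).card + (univ.filter fun s => p i s ≠ 0).card)
            ≤ bcWt d p := Finset.sum_le_sum_of_subset (Finset.subset_univ _)
        rw [Finset.sum_insert (by simp [hne1, F5]),
          Finset.sum_pair hne2] at hsum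
        omega
  · -- construction of a minimum-weight codeword
    have hM1' : 1 < 2*ν := hM1
    have hne01M : (0 : Fin (2*ν)) ≠ 1 := by
      intro h
      have := congrArg Fin.val h
      rw [Fin.val_zero, Fin.val_one', Nat.mod_eq_of_lt hM1'] at this
      omega
    have hoo : ∀ c s c' s', αo c s = αo c' s' → c = c' ∧ s = s' := by
      intro c s c' s' h
      have := hinj (a₁ := Sum.inl (c,s)) (a₂ := Sum.inl (c',s')) (by simpa using h)
      simpa [Prod.ext_iff] using this
    have hoe : ∀ c s c' t, αo c s ≠ αe c' t := by
      intro c s c' t h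
      have := hinj (a₁ := Sum.inl (c,s)) (a₂ := Sum.inr (c',t)) (by simpa using h)
      simp at this
    set s0 : Fin ω := ⟨0, hω⟩ with hs0
    set A : Polynomial F := ∏ s : Fin ω, (X - C (αo 0 s)) with hA'
    set B : Polynomial F := ∏ s ∈ (univ.erase s0), (X - C (αo 1 s)) with hB'
    set m : Polynomial F := A * B with hmdef
    have hA : A.Monic := monic_prod_of_monic _ _ fun s _ => monic_X_sub_C _
    have hB : B.Monic := monic_prod_of_monic _ _ fun s _ => monic_X_sub_C _
    have hmM : m.Monic := hA.mul hB
    have hm0 : m ≠ 0 := hmM.ne_zero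
    have hdeg : m.natDegree ≤ 2*ω - 1 := by
      have hdA : A.natDegree = ω := by
        rw [hA', natDegree_prod _ _ (fun s _ => X_sub_C_ne_zero _)]
        simp [natDegree_X_sub_C]
      have hdB : B.natDegree = ω - 1 := by
        rw [hB', natDegree_prod _ _ (fun s _ => X_sub_C_ne_zero _)]
        simp [natDegree_X_sub_C, Finset.card_erase_of_mem]
      have : m.natDegree = ω + (ω - 1) := by
        rw [hmdef, natDegree_mul hA.ne_zero hB.ne_zero, hdA, hdB]
      omega
    have hEo0 : ∀ s, m.eval (αo 0 s) = 0 := by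
      intro s
      rw [hmdef, eval_mul]
      have : A.eval (αo 0 s) = 0 := by
        rw [hA', eval_prod]
        apply Finset.prod_eq_zero (Finset.mem_univ s)
        simp
      rw [this, zero_mul]
    have hEo1 : ∀ s, s ≠ s0 → m.eval (αo 1 s) = 0 := by
      intro s hs
      rw [hmdef, eval_mul]
      have : B.eval (αo 1 s) = 0 := by
        rw [hB', eval_prod]
        apply Finset.prod_eq_zero (Finset.mem_erase.2 ⟨hs, Finset.mem_univ s⟩)
        simp
      rw [this, mul_zero]
    have hnz : ∀ x : F, (∀ s, x ≠ αo 0 s) → (∀ s, s ≠ s0 → x ≠ αo 1 s) → m.eval x ≠ 0 := by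
      intro x h1 h2
      rw [hmdef, eval_mul]
      apply mul_ne_zero
      · rw [hA', eval_prod]
        apply Finset.prod_ne_zero_iff.2
        intro s _
        simpa [sub_eq_zero] using h1 s
      · rw [hB', eval_prod]
        apply Finset.prod_ne_zero_iff.2
        intro s hs
        simpa [sub_eq_zero] using h2 s (Finset.mem_erase.1 hs).1
    have h10 : (1 : Fin 2) ≠ 0 := by decide
    have hv1 : m.eval (αo 1 s0) ≠ 0 := by
      apply hnz
      · intro s h
        exact h10 (hoo _ _ _ _ h).1
      · intro s hs h
        exact hs.symm (hoo _ _ _ _ h).2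
    have hve : ∀ c t, m.eval (αe c t) ≠ 0 := by
      intro c t
      apply hnz
      · intro s h
        exact hoe _ _ _ _ h.symm
      · intro s _ h
        exact hoe _ _ _ _ h.symm
    refine ⟨fun i => if i = 1 then (fun s => m.eval (αo 1 s)) else 0,
      fun i => if i = 0 then (fun t => m.eval (αe 0 t))
        else if i = 1 then (fun t => m.eval (αe 1 t)) else 0, ?_, ?_, ?_⟩
    · -- membership
      intro i
      rcases eq_or_ne i 0 with rfl | hi0
      · refine ⟨m, hdeg, ?_, ?_⟩
        · intro j s
          fin_cases j
          · simp only [Fin.val_zero, Nat.cast_zero, add_zero, Fin.isValue]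
            rw [if_neg hne01M]
            simp [hEo0]
          · simp only [Fin.val_zero, Nat.cast_zero, Nat.cast_one, zero_add, Fin.isValue]
            simp
        · intro t
          simp
      rcases eq_or_ne i 1 with rfl | hi1
      · refine ⟨m, hdeg, ?_, ?_⟩
        · have hval1 : (((1 : Fin (2*ν)).val : ℕ) : Fin 2) = 1 := by
            rw [Fin.val_one', Nat.mod_eq_of_lt hM1', Nat.cast_one]
          have h11 : (1 : Fin (2*ν)) + 1 ≠ 1 := by
            intro h
            have h0 : (1 : Fin (2*ν)) = 0 := by
              nth_rewrite 3 [show (1 : Fin (2*ν)) = 0 + 1 from (zero_add _).symm] at h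
              exact add_right_cancel h
            exact hne01M h0.symm
          have hmod : 1 % (2*ν) = 1 := Nat.mod_eq_of_lt hM1'
          intro j s
          fin_cases j
          · simp [hval1, hmod]
          · simp [hval1, h11, hEo0, hmod]
        · intro t
          have hval1 : (((1 : Fin (2*ν)).val : ℕ) : Fin 2) = 1 := by
            rw [Fin.val_one', Nat.mod_eq_of_lt hM1', Nat.cast_one]
          have h10' : (1 : Fin (2*ν)) ≠ 0 := Ne.symm hne01M
          have hmod : 1 % (2*ν) = 1 := Nat.mod_eq_of_lt hM1'
          simp [hval1, h10', hmod]
      · refine ⟨0, by simp, ?_, ?_⟩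
        · intro j s
          fin_cases j
          · simp only [Fin.val_zero, Nat.cast_zero, add_zero]
            rw [if_neg hi1]
            simp
          · simp only [Nat.cast_one]
            have : i + 1 ≠ 1 := by
              intro h
              apply hi0
              nth_rewrite 2 [show (1 : Fin (2*ν)) = 0 + 1 from (zero_add _).symm] at h
              exact add_right_cancel h
            rw [if_neg this]
            simp
        · intro t
          simp [hi0, hi1]
    · -- nonzero
      left
      intro h
      have := congrFun (congrFun h 1) s0
      rw [if_pos rfl] at this
      simp only [Pi.zero_apply] at this
      exact hv1 this
    · -- weight
      have hzero : ∀ i : Fin (2*ν), i ∉ ({0, 1} : Finset (Fin (2*ν))) →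
          ((univ.filter fun s => (if i = 1 then (fun s => m.eval (αo 1 s)) else 0) s ≠ 0).card
            + (univ.filter fun t => (if i = 0 then (fun t => m.eval (αe 0 t))
                else if i = 1 then (fun t => m.eval (αe 1 t)) else 0) t ≠ 0).card) = 0 := by
        intro i hi
        simp only [Finset.mem_insert, Finset.mem_singleton] at hi
        push_neg at hi
        rw [if_neg hi.2, if_neg hi.1, if_neg hi.2]
        simp
      rw [bcWt]
      rw [← Finset.sum_subset (Finset.subset_univ ({0, 1} : Finset (Fin (2*ν))))
        (fun i _ hi => hzero i hi)]
      rw [Finset.sum_pair hne01M]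
      rw [if_neg hne01M, if_pos rfl, if_pos rfl, if_neg (Ne.symm hne01M), if_pos rfl]
      have w1 : (univ.filter fun s => (0 : Fin ω → F) s ≠ 0).card = 0 := by simp
      have w2 : (univ.filter fun t => m.eval (αe 0 t) ≠ 0).card = ρ := by
        rw [Finset.filter_true_of_mem (fun t _ => hve 0 t)]
        simp
      have w3 : (univ.filter fun s => m.eval (αo 1 s) ≠ 0).card = 1 := by
        have : (univ.filter fun s => m.eval (αo 1 s) ≠ 0) = {s0} := by
          ext s
          simp only [Finset.mem_filter, Finset.mem_univ, true_and, Finset.mem_singleton]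
          constructor
          · intro h
            by_contra hs
            exact h (hEo1 s hs)
          · rintro rfl
            exact hv1
        rw [this, Finset.card_singleton]
      have w4 : (univ.filter fun t => m.eval (αe 1 t) ≠ 0).card = ρ := by
        rw [Finset.filter_true_of_mem (fun t _ => hve 1 t)]
        simp
      rw [w1, w2, w3, w4]
      omega
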